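/- (Sparse form bound implies norm bound) Let 0 ≤ α < 2n, q > 0, v a weight, g₁,g₂ nonnegative locally integrable, 𝒟 a dyadic grid, and {Q_j^k} the sparse CZ family for ℳ^𝒟_α(g₁,g₂) with parameter a = 2^{(2-α/n)(n+1)}. Then ∫_{ℝⁿ} ℳ^𝒟_α(g₁,g₂)^q v dx ≤ C(n,α,q) ∑_{k,j} (|Q_j^k|^{-(2-α/n)} ∫_{Q_j^k} g₁ ∫_{Q_j^k} g₂)^q v(E(Q_j^k)), where E(Q_j^k) = Q_j^k ∖ Ω_{k+1} and v(E) = ∫_E v dx. -/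

import Mathlib

open MeasureTheory ENNReal Set
open scoped BigOperators

noncomputable section

abbrev Rn (n : ℕ) := Fin n → ℝ

/-- An axis-parallel half-open cube with corner `c` and side length `l`. -/
def cube {n : ℕ} (c : Rn n) (l : ℝ) : Set (Rn n) :=
  {x | ∀ i, c i ≤ x i ∧ x i < c i + l}

/-- `σ(Q) = ∫_Q σ dx`. -/
def wtI {n : ℕ} (σ : Rn n → ℝ≥0∞) (Q : Set (Rn n)) : ℝ≥0∞ := ∫⁻ x in Q, σ x

/-- `𝔼^σ_Q f = σ(Q)⁻¹ ∫_Q f σ`. -/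
def avgE {n : ℕ} (σ f : Rn n → ℝ≥0∞) (Q : Set (Rn n)) : ℝ≥0∞ :=
  (wtI σ Q)⁻¹ * ∫⁻ x in Q, f x * σ x

/-- The cube `2^{-k}([0,1)ⁿ + m + (-1)^k t)` of the shifted dyadic grid. -/
def gridCube (n : ℕ) (k : ℤ) (m : Fin n → ℤ) (t : Fin n → ℝ) : Set (Rn n) :=
  {x | ∀ i, (2:ℝ) ^ (-k) * ((m i : ℝ) + (-1:ℝ) ^ k * t i) ≤ x i ∧
       x i < (2:ℝ) ^ (-k) * ((m i : ℝ) + (-1:ℝ) ^ k * t i + 1)}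

/-- The shifted dyadic grid `𝒟_t`. -/
def shiftedGrid (n : ℕ) (t : Fin n → ℝ) : Set (Set (Rn n)) :=
  {Q | ∃ (k : ℤ) (m : Fin n → ℤ), Q = gridCube n k m t}

/-- Abstract dyadic grid: cubes of dyadic side lengths, nested or disjoint,
and for each scale the cubes of that side length cover `ℝⁿ`. -/
def IsDyadicGrid {n : ℕ} (𝒟 : Set (Set (Rn n))) : Prop :=
  (∀ Q ∈ 𝒟, ∃ (c : Rn n) (k : ℤ), Q = cube c ((2:ℝ) ^ k)) ∧
  (∀ Q ∈ 𝒟, ∀ R ∈ 𝒟, Q ∩ R = Q ∨ Q ∩ R = R ∨ Q ∩ R = ∅) ∧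
  (∀ k : ℤ, (⋃ Q ∈ {Q | Q ∈ 𝒟 ∧ ∃ c : Rn n, Q = cube c ((2:ℝ) ^ k)}, Q) = univ)

/-- The multilinear fractional maximal operator `ℳ_α`. -/
def MM (n m : ℕ) (α : ℝ) (g : Fin m → Rn n → ℝ≥0∞) (x : Rn n) : ℝ≥0∞ :=
  ⨆ (c : Rn n) (l : ℝ) (_ : 0 < l) (_ : x ∈ cube c l),
    ∏ i, (volume (cube c l) ^ (-(1 - α / ((m : ℝ) * (n : ℝ)))) * ∫⁻ y in cube c l, g i y)

/-- The multilinear fractional maximal operator restricted to a grid `𝒟`. -/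
def MMD (n m : ℕ) (α : ℝ) (𝒟 : Set (Set (Rn n))) (g : Fin m → Rn n → ℝ≥0∞)
    (x : Rn n) : ℝ≥0∞ :=
  ⨆ (Q : Set (Rn n)) (_ : Q ∈ 𝒟) (_ : x ∈ Q),
    ∏ i, (volume Q ^ (-(1 - α / ((m : ℝ) * (n : ℝ)))) * ∫⁻ y in Q, g i y)

/-- The bilinear fractional maximal operator `ℳ_α(g₁,g₂)`. -/
def M2 (n : ℕ) (α : ℝ) (g₁ g₂ : Rn n → ℝ≥0∞) (x : Rn n) : ℝ≥0∞ :=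
  ⨆ (c : Rn n) (l : ℝ) (_ : 0 < l) (_ : x ∈ cube c l),
    (volume (cube c l) ^ (-(1 - α / (2 * (n : ℝ)))) * ∫⁻ y in cube c l, g₁ y) *
      (volume (cube c l) ^ (-(1 - α / (2 * (n : ℝ)))) * ∫⁻ y in cube c l, g₂ y)

/-- The bilinear dyadic fractional maximal operator `ℳ^𝒟_α(g₁,g₂)`. -/
def M2D (n : ℕ) (α : ℝ) (𝒟 : Set (Set (Rn n))) (g₁ g₂ : Rn n → ℝ≥0∞) (x : Rn n) : ℝ≥0∞ :=
  ⨆ (Q : Set (Rn n)) (_ : Q ∈ 𝒟) (_ : x ∈ Q),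
    (volume Q ^ (-(1 - α / (2 * (n : ℝ)))) * ∫⁻ y in Q, g₁ y) *
      (volume Q ^ (-(1 - α / (2 * (n : ℝ)))) * ∫⁻ y in Q, g₂ y)

/-- Sawyer's bilinear testing constant `[w⃗,v]_{S_{P⃗,q}}`. -/
def sawyer2 (n : ℕ) (α p₁ p₂ q : ℝ) (σ₁ σ₂ v : Rn n → ℝ≥0∞) : ℝ≥0∞ :=
  ⨆ (c : Rn n) (l : ℝ) (_ : 0 < l),
    (∫⁻ x in cube c l,
        M2 n α ((cube c l).indicator σ₁) ((cube c l).indicator σ₂) x ^ q * v x) ^ (1/q) /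
      (wtI σ₁ (cube c l) ^ (1/p₁) * wtI σ₂ (cube c l) ^ (1/p₂))

/-- Sawyer's multilinear testing constant. -/
def sawyerM (n m : ℕ) (α q : ℝ) (p : Fin m → ℝ) (σ : Fin m → Rn n → ℝ≥0∞)
    (v : Rn n → ℝ≥0∞) : ℝ≥0∞ :=
  ⨆ (c : Rn n) (l : ℝ) (_ : 0 < l),
    (∫⁻ x in cube c l, MM n m α (fun i => (cube c l).indicator (σ i)) x ^ q * v x) ^ (1/q) /
      ∏ i, wtI (σ i) (cube c l) ^ (1 / p i)

/-- The principal cubes of `f` relative to `σ` inside `Qbar`, generation by generation. -/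
def principalCubes {n : ℕ} (𝒟 : Set (Set (Rn n))) (σ f : Rn n → ℝ≥0∞)
    (Qbar : Set (Rn n)) : ℕ → Set (Set (Rn n))
  | 0 => {Qbar}
  | k + 1 => {G' | G' ∈ 𝒟 ∧ ∃ G ∈ principalCubes 𝒟 σ f Qbar k, G' ⊆ G ∧
      4 * avgE σ f G < avgE σ f G' ∧
      ∀ G'' ∈ 𝒟, G' ⊆ G'' → G'' ⊆ G → 4 * avgE σ f G < avgE σ f G'' → G'' = G'}

namespace Stmt18Aux
open Filter Topology
section


lemma rpow_half_mul_le (x y : ℝ≥0∞) : x ^ (1/2:ℝ) * y ^ (1/2:ℝ) ≤ x + y := by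
  calc x ^ (1/2:ℝ) * y ^ (1/2:ℝ)
      ≤ (x+y) ^ (1/2:ℝ) * (x+y) ^ (1/2:ℝ) :=
        mul_le_mul' (ENNReal.rpow_le_rpow le_self_add (by norm_num))
          (ENNReal.rpow_le_rpow le_add_self (by norm_num))
    _ = (x+y) ^ ((1/2:ℝ)+(1/2:ℝ)) :=
        (ENNReal.rpow_add_of_nonneg _ _ (by norm_num) (by norm_num)).symm
    _ = x + y := by norm_num

lemma tsum_half_mul_half_le {ι : Type*} (f g : ι → ℝ≥0∞) :
    ∑' i, (f i) ^ (1/2:ℝ) * (g i) ^ (1/2:ℝ) ≤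
      2 * ((∑' i, f i) ^ (1/2:ℝ) * (∑' i, g i) ^ (1/2:ℝ)) := by
  rcases eq_or_ne (∑' i, f i) 0 with h0 | hA0
  · have hf := ENNReal.tsum_eq_zero.mp h0
    have : ∀ i, (f i) ^ (1/2:ℝ) * (g i) ^ (1/2:ℝ) = 0 := by
      intro i; rw [hf i, ENNReal.zero_rpow_of_pos (by norm_num), zero_mul]
    rw [tsum_congr this, tsum_zero]; exact zero_le
  rcases eq_or_ne (∑' i, g i) 0 with h0 | hB0
  · have hg := ENNReal.tsum_eq_zero.mp h0
    have : ∀ i, (f i) ^ (1/2:ℝ) * (g i) ^ (1/2:ℝ) = 0 := by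
      intro i; rw [hg i, ENNReal.zero_rpow_of_pos (by norm_num), mul_zero]
    rw [tsum_congr this, tsum_zero]; exact zero_le
  rcases eq_or_ne (∑' i, f i) ∞ with htop | hAt
  · refine le_trans le_top (le_of_eq ?_)
    rw [htop, ENNReal.top_rpow_of_pos (by norm_num), ENNReal.top_mul, ENNReal.mul_top] <;>
      simp [ENNReal.rpow_eq_zero_iff, hB0]
  rcases eq_or_ne (∑' i, g i) ∞ with htop | hBt
  · refine le_trans le_top (le_of_eq ?_)
    rw [htop, ENNReal.top_rpow_of_pos (by norm_num), ENNReal.mul_top, ENNReal.mul_top] <;>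
      simp [ENNReal.rpow_eq_zero_iff, hA0]
  · -- main case
    set A := ∑' i, f i with hA
    set B := ∑' i, g i with hB
    have key : ∀ i, (f i) ^ (1/2:ℝ) * (g i) ^ (1/2:ℝ) ≤
        (f i / A + g i / B) * (A ^ (1/2:ℝ) * B ^ (1/2:ℝ)) := by
      intro i
      have hfi : f i = f i / A * A := (ENNReal.div_mul_cancel hA0 hAt).symm
      have hgi : g i = g i / B * B := (ENNReal.div_mul_cancel hB0 hBt).symm
      calc (f i) ^ (1/2:ℝ) * (g i) ^ (1/2:ℝ)
          = (f i / A) ^ (1/2:ℝ) * (g i / B) ^ (1/2:ℝ) * (A ^ (1/2:ℝ) * B ^ (1/2:ℝ)) := by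
            rw [show (f i) ^ (1/2:ℝ) = (f i / A) ^ (1/2:ℝ) * A ^ (1/2:ℝ) by
                  rw [← ENNReal.mul_rpow_of_nonneg _ _ (by norm_num), ← hfi],
                show (g i) ^ (1/2:ℝ) = (g i / B) ^ (1/2:ℝ) * B ^ (1/2:ℝ) by
                  rw [← ENNReal.mul_rpow_of_nonneg _ _ (by norm_num), ← hgi]]
            ring
        _ ≤ (f i / A + g i / B) * (A ^ (1/2:ℝ) * B ^ (1/2:ℝ)) :=
            mul_le_mul_left (rpow_half_mul_le _ _) _
    calc ∑' i, (f i) ^ (1/2:ℝ) * (g i) ^ (1/2:ℝ)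
        ≤ ∑' i, (f i / A + g i / B) * (A ^ (1/2:ℝ) * B ^ (1/2:ℝ)) := Summable.tsum_le_tsum key
          ENNReal.summable ENNReal.summable
      _ = (∑' i, (f i / A + g i / B)) * (A ^ (1/2:ℝ) * B ^ (1/2:ℝ)) := ENNReal.tsum_mul_right
      _ = (A/A + B/B) * (A ^ (1/2:ℝ) * B ^ (1/2:ℝ)) := by
          rw [ENNReal.tsum_add]
          simp only [div_eq_mul_inv, ENNReal.tsum_mul_right]; rfl
      _ = 2 * (A ^ (1/2:ℝ) * B ^ (1/2:ℝ)) := by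
          rw [ENNReal.div_self hA0 hAt, ENNReal.div_self hB0 hBt]; norm_num

lemma tsum_rpow_le_rpow_tsum {ι : Type*} (f : ι → ℝ≥0∞) {r : ℝ} (hr : 1 ≤ r) :
    ∑' i, (f i) ^ r ≤ (∑' i, f i) ^ r := by
  rcases eq_or_ne (∑' i, f i) ∞ with htop | hZ
  · rw [htop, ENNReal.top_rpow_of_pos (lt_of_lt_of_le one_pos hr)]; exact le_top
  · have hfZ : ∀ i, f i ≤ ∑' i, f i := fun i => ENNReal.le_tsum i
    calc ∑' i, (f i) ^ r = ∑' i, (f i) ^ (r - 1 + 1) := by norm_num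
      _ = ∑' i, (f i) ^ (r-1) * (f i) ^ (1:ℝ) := by
          congr 1; funext i
          exact ENNReal.rpow_add_of_nonneg _ _ (by linarith) (by norm_num)
      _ ≤ ∑' i, (∑' j, f j) ^ (r-1) * f i := by
          refine Summable.tsum_le_tsum (fun i => ?_) ENNReal.summable ENNReal.summable
          rw [ENNReal.rpow_one]
          exact mul_le_mul_left (ENNReal.rpow_le_rpow (hfZ i) (by linarith)) _
      _ = (∑' j, f j) ^ (r-1) * ∑' i, f i := ENNReal.tsum_mul_left
      _ = (∑' j, f j) ^ (r - 1 + 1) := by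
          rw [ENNReal.rpow_add_of_nonneg _ _ (by linarith) (by norm_num), ENNReal.rpow_one]
      _ = (∑' j, f j) ^ r := by norm_num

lemma rpow_tsum_le_tsum_rpow {ι : Type*} (f : ι → ℝ≥0∞) {θ : ℝ} (hθ0 : 0 < θ) (hθ1 : θ ≤ 1) :
    (∑' i, f i) ^ θ ≤ ∑' i, (f i) ^ θ := by
  have h1 : ∑' i, f i = ∑' i, ((f i ^ θ) ^ (1/θ:ℝ)) := by
    congr 1; funext i
    rw [← ENNReal.rpow_mul, mul_one_div, div_self hθ0.ne', ENNReal.rpow_one]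
  have h2 : ∑' i, ((f i ^ θ) ^ (1/θ:ℝ)) ≤ (∑' i, f i ^ θ) ^ (1/θ:ℝ) :=
    tsum_rpow_le_rpow_tsum _ (by rw [le_div_iff₀ hθ0]; linarith)
  have h3 : (∑' i, f i) ^ θ ≤ ((∑' i, f i ^ θ) ^ (1/θ:ℝ)) ^ θ := by
    rw [h1]; exact ENNReal.rpow_le_rpow h2 hθ0.le
  calc (∑' i, f i) ^ θ ≤ ((∑' i, f i ^ θ) ^ (1/θ:ℝ)) ^ θ := h3
    _ = ∑' i, f i ^ θ := by
        rw [← ENNReal.rpow_mul, one_div, inv_mul_cancel₀ hθ0.ne', ENNReal.rpow_one]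


end
section


variable {n : ℕ}

lemma mem_cube_self {c : Rn n} {l : ℝ} (hl : 0 < l) : c ∈ cube c l :=
  fun i => ⟨le_refl _, by linarith⟩

lemma cube_nonempty {c : Rn n} {l : ℝ} (hl : 0 < l) : (cube c l).Nonempty :=
  ⟨c, mem_cube_self hl⟩

lemma measurableSet_cube (c : Rn n) (l : ℝ) : MeasurableSet (cube c l) := by
  have h : cube c l = ⋂ i, (fun x : Rn n => x i) ⁻¹' Set.Ico (c i) (c i + l) := by
    ext x; simp [cube, Set.mem_iInter, Set.mem_Ico]
  rw [h]
  exact MeasurableSet.iInter fun i => (measurable_pi_apply i) measurableSet_Ico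

lemma cube_eq_pi (c : Rn n) (l : ℝ) :
    cube c l = Set.pi Set.univ (fun i => Set.Ico (c i) (c i + l)) := by
  ext x; simp [cube, Set.mem_pi, Set.mem_Ico]

lemma volume_cube (c : Rn n) (l : ℝ) : volume (cube c l) = ENNReal.ofReal l ^ n := by
  rw [cube_eq_pi, volume_pi_pi]
  simp [Real.volume_Ico]

lemma volume_cube_pos {c : Rn n} {l : ℝ} (hl : 0 < l) : volume (cube c l) ≠ 0 := by
  rw [volume_cube]
  exact pow_ne_zero n (ENNReal.ofReal_pos.2 hl).ne'

lemma volume_cube_ne_top (c : Rn n) (l : ℝ) : volume (cube c l) ≠ ∞ := by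
  rw [volume_cube]
  exact ENNReal.pow_ne_top ENNReal.ofReal_ne_top

lemma cube_subset_coords {c c' : Rn n} {l l' : ℝ} (hl : 0 < l)
    (h : cube c l ⊆ cube c' l') (i : Fin n) : c' i ≤ c i ∧ c i + l ≤ c' i + l' := by
  have hc := h (mem_cube_self hl)
  refine ⟨(hc i).1, ?_⟩
  by_contra hlt
  push_neg at hlt
  set t := max (c i) (c' i + l') with ht
  have htlt : t < c i + l := max_lt (by linarith) hlt
  have hx : (Function.update c i t) ∈ cube c l := by
    intro j
    rcases eq_or_ne j i with rfl | hj
    · simp only [Function.update_self]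
      exact ⟨le_max_left _ _, htlt⟩
    · simp only [Function.update_of_ne hj]
      exact ⟨le_refl _, by linarith⟩
  have h2 := (h hx) i
  simp only [Function.update_self] at h2
  exact absurd h2.2 (not_lt.2 (le_max_right _ _))

lemma side_le_of_cube_subset (hn : 0 < n) {c c' : Rn n} {l l' : ℝ} (hl : 0 < l)
    (h : cube c l ⊆ cube c' l') : l ≤ l' := by
  obtain ⟨h1, h2⟩ := cube_subset_coords hl h ⟨0, hn⟩
  linarith

lemma cube_eq_of_subset_of_side_le (hn : 0 < n) {c c' : Rn n} {l l' : ℝ} (hl : 0 < l)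
    (h : cube c l ⊆ cube c' l') (hle : l' ≤ l) : cube c l = cube c' l' := by
  have hll : l = l' := le_antisymm (side_le_of_cube_subset hn hl h) hle
  subst hll
  have hc : c = c' := by
    funext i
    obtain ⟨h1, h2⟩ := cube_subset_coords hl h i
    have : c i ≤ c' i := by linarith
    linarith [le_antisymm this h1]
  rw [hc]


end
section


variable {n : ℕ}

variable {𝒟 : Set (Set (Rn n))}

lemma grid_nested (h𝒟 : IsDyadicGrid 𝒟) {P Q : Set (Rn n)} (hP : P ∈ 𝒟) (hQ : Q ∈ 𝒟)
    (hne : (P ∩ Q).Nonempty) : P ⊆ Q ∨ Q ⊆ P := by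
  rcases h𝒟.2.1 P hP Q hQ with h | h | h
  · exact Or.inl (by rw [← h]; exact inter_subset_right)
  · exact Or.inr (by rw [← h]; exact inter_subset_left)
  · rw [h] at hne; exact absurd hne (by simp)

lemma grid_measurable (h𝒟 : IsDyadicGrid 𝒟) {Q : Set (Rn n)} (hQ : Q ∈ 𝒟) :
    MeasurableSet Q := by
  obtain ⟨c, s, rfl⟩ := h𝒟.1 Q hQ
  exact measurableSet_cube c _

lemma grid_vol_ne_zero (h𝒟 : IsDyadicGrid 𝒟) {Q : Set (Rn n)} (hQ : Q ∈ 𝒟) :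
    volume Q ≠ 0 := by
  obtain ⟨c, s, rfl⟩ := h𝒟.1 Q hQ
  exact volume_cube_pos (zpow_pos two_pos s)

lemma grid_vol_ne_top (h𝒟 : IsDyadicGrid 𝒟) {Q : Set (Rn n)} (hQ : Q ∈ 𝒟) :
    volume Q ≠ ∞ := by
  obtain ⟨c, s, rfl⟩ := h𝒟.1 Q hQ
  exact volume_cube_ne_top c _

lemma grid_nonempty (h𝒟 : IsDyadicGrid 𝒟) {Q : Set (Rn n)} (hQ : Q ∈ 𝒟) :
    Q.Nonempty := by
  obtain ⟨c, s, rfl⟩ := h𝒟.1 Q hQ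
  exact cube_nonempty (zpow_pos two_pos s)

lemma grid_countable (hn : 0 < n) (h𝒟 : IsDyadicGrid 𝒟) : 𝒟.Countable := by
  have hsub : 𝒟 ⊆ ⋃ (s : ℤ), {Q | Q ∈ 𝒟 ∧ ∃ c, Q = cube c ((2:ℝ)^s)} := by
    intro Q hQ
    obtain ⟨c, s, rfl⟩ := h𝒟.1 Q hQ
    exact mem_iUnion.2 ⟨s, hQ, c, rfl⟩
  refine Set.Countable.mono hsub (countable_iUnion fun s => ?_)
  set Dk := {Q | Q ∈ 𝒟 ∧ ∃ c, Q = cube c ((2:ℝ)^s)} with hDk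
  have hrat : ∀ Q : ↥Dk, ∃ qq : Fin n → ℚ, (fun i => (qq i : ℝ)) ∈ (Q : Set (Rn n)) := by
    rintro ⟨Q, hQ, c, rfl⟩
    have h2 : ∀ i, ∃ r : ℚ, c i < (r:ℝ) ∧ (r:ℝ) < c i + 2^s := fun i =>
      exists_rat_btwn (by linarith [zpow_pos (two_pos (α := ℝ)) s])
    choose qq hq using h2
    exact ⟨qq, fun i => ⟨(hq i).1.le, (hq i).2⟩⟩
  choose F hF using hrat
  have hinj : Function.Injective F := by
    rintro ⟨Q, hQ⟩ ⟨R, hR⟩ hFQR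
    have hmemQ := hF ⟨Q, hQ⟩
    have hmemR := hF ⟨R, hR⟩
    rw [hFQR] at hmemQ
    have hne : (Q ∩ R).Nonempty := ⟨_, hmemQ, hmemR⟩
    obtain ⟨cQ, rfl⟩ := hQ.2
    obtain ⟨cR, rfl⟩ := hR.2
    have heq : cube cQ ((2:ℝ)^s) = cube cR ((2:ℝ)^s) := by
      rcases grid_nested h𝒟 hQ.1 hR.1 hne with h | h
      · exact cube_eq_of_subset_of_side_le hn (zpow_pos two_pos s) h le_rfl
      · exact (cube_eq_of_subset_of_side_le hn (zpow_pos two_pos s) h le_rfl).symm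
    exact Subtype.ext heq
  have : Countable ↥Dk := hinj.countable
  exact Set.countable_coe_iff.mp this

lemma grid_exists_max (hn : 0 < n) (h𝒟 : IsDyadicGrid 𝒟) (T : Set (Set (Rn n)))
    (hT𝒟 : T ⊆ 𝒟) (x : Rn n) (hx : ∀ R ∈ T, x ∈ R) (hTne : T.Nonempty)
    {V : ℝ≥0∞} (hV : V ≠ ∞) (hvol : ∀ R ∈ T, volume R ≤ V) :
    ∃ R₀ ∈ T, ∀ R ∈ T, R ⊆ R₀ := by
  obtain ⟨m, hm⟩ := ENNReal.exists_nat_gt hV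
  set P : ℤ → Prop := fun s => ∃ R ∈ T, ∃ c, R = cube c ((2:ℝ)^s) with hP
  have hbdd : ∀ s, P s → s ≤ (m : ℤ) := by
    rintro s ⟨R, hRT, c, rfl⟩
    by_contra hs
    push_neg at hs
    have hs0 : (0:ℤ) ≤ s := le_trans (Int.ofNat_nonneg m) hs.le
    have h1 : (1:ℝ) ≤ (2:ℝ)^s := one_le_zpow₀ (by norm_num) hs0
    have h2 : ((2:ℝ)^(m:ℤ)) ≤ (2:ℝ)^s :=
      zpow_le_zpow_right₀ (by norm_num) hs.le
    have hchain : (m : ℝ≥0∞) < volume (cube c ((2:ℝ)^s)) := by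
      rw [volume_cube]
      calc (m : ℝ≥0∞) < ENNReal.ofReal ((2:ℝ)^(m:ℤ)) := by
            rw [← ENNReal.ofReal_natCast]
            apply ENNReal.ofReal_lt_ofReal_iff_of_nonneg (by positivity) |>.2
            rw [zpow_natCast]
            exact_mod_cast Nat.lt_two_pow_self
        _ ≤ ENNReal.ofReal ((2:ℝ)^s) := ENNReal.ofReal_le_ofReal h2
        _ ≤ ENNReal.ofReal ((2:ℝ)^s) ^ n := le_self_pow₀ (by
              rw [← ENNReal.ofReal_one]; exact ENNReal.ofReal_le_ofReal h1) hn.ne'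
    exact absurd (lt_of_lt_of_le (lt_trans hm hchain) (hvol _ hRT)) (lt_irrefl _)
  have hinh : ∃ s, P s := by
    obtain ⟨R, hR⟩ := hTne
    obtain ⟨c, s, rfl⟩ := h𝒟.1 R (hT𝒟 hR)
    exact ⟨s, _, hR, c, rfl⟩
  obtain ⟨s₀, hPs₀, hgreatest⟩ := Int.exists_greatest_of_bdd ⟨(m:ℤ), hbdd⟩ hinh
  obtain ⟨R₀, hR₀T, c₀, rfl⟩ := hPs₀
  refine ⟨_, hR₀T, ?_⟩
  intro R hRT
  obtain ⟨c, s, rfl⟩ := h𝒟.1 R (hT𝒟 hRT)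
  have hne : (cube c ((2:ℝ)^s) ∩ cube c₀ ((2:ℝ)^s₀)).Nonempty :=
    ⟨x, hx _ hRT, hx _ hR₀T⟩
  rcases grid_nested h𝒟 (hT𝒟 hRT) (hT𝒟 hR₀T) hne with h | h
  · exact h
  · have hs : s ≤ s₀ := hgreatest s ⟨_, hRT, c, rfl⟩
    have hss : (2:ℝ)^s ≤ (2:ℝ)^s₀ := zpow_le_zpow_right₀ (by norm_num) hs
    rw [cube_eq_of_subset_of_side_le hn (zpow_pos two_pos s₀) h hss]


end
section


variable {n : ℕ}

variable {𝒟 : Set (Set (Rn n))}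
/-- The value of a cube. -/
noncomputable def val (n : ℕ) (α : ℝ) (g₁ g₂ : Rn n → ℝ≥0∞) (Q : Set (Rn n)) : ℝ≥0∞ :=
  (volume Q ^ (-(1 - α / (2 * (n : ℝ)))) * ∫⁻ y in Q, g₁ y) *
    (volume Q ^ (-(1 - α / (2 * (n : ℝ)))) * ∫⁻ y in Q, g₂ y)

variable {α : ℝ} {g₁ g₂ : Rn n → ℝ≥0∞}

lemma M2D_eq (x : Rn n) :
    M2D n α 𝒟 g₁ g₂ x = ⨆ (Q : Set (Rn n)) (_ : Q ∈ 𝒟) (_ : x ∈ Q), val n α g₁ g₂ Q := rfl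

lemma val_eq (hn : 0 < n) {Q : Set (Rn n)} (h0 : volume Q ≠ 0) (ht : volume Q ≠ ∞) :
    val n α g₁ g₂ Q
      = volume Q ^ (-(2 - α / (n:ℝ))) * (∫⁻ y in Q, g₁ y) * (∫⁻ y in Q, g₂ y) := by
  have hne : (n:ℝ) ≠ 0 := Nat.cast_ne_zero.mpr hn.ne'
  have hadd : -(1 - α / (2 * (n:ℝ))) + -(1 - α / (2 * (n:ℝ))) = -(2 - α / (n:ℝ)) := by
    field_simp
    ring
  rw [val, mul_mul_mul_comm, ← ENNReal.rpow_add _ _ h0 ht, hadd, mul_assoc]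

lemma val_le_M2D {Q : Set (Rn n)} (hQ : Q ∈ 𝒟) {x : Rn n} (hx : x ∈ Q) :
    val n α g₁ g₂ Q ≤ M2D n α 𝒟 g₁ g₂ x := by
  rw [M2D_eq]
  exact le_iSup_of_le Q (le_iSup_of_le hQ (le_iSup_of_le hx le_rfl))

lemma mem_level_iff {lam : ℝ≥0∞} {x : Rn n} :
    lam < M2D n α 𝒟 g₁ g₂ x ↔ ∃ Q ∈ 𝒟, x ∈ Q ∧ lam < val n α g₁ g₂ Q := by
  constructor
  · intro h
    rw [M2D_eq] at h
    obtain ⟨Q, hQ⟩ := lt_iSup_iff.mp h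
    obtain ⟨hQ𝒟, hQ2⟩ := lt_iSup_iff.mp hQ
    obtain ⟨hxQ, h3⟩ := lt_iSup_iff.mp hQ2
    exact ⟨Q, hQ𝒟, hxQ, h3⟩
  · rintro ⟨Q, hQ𝒟, hxQ, h⟩
    exact lt_of_lt_of_le h (val_le_M2D hQ𝒟 hxQ)

lemma valcube_subset_level {lam : ℝ≥0∞} {Q : Set (Rn n)} (hQ : Q ∈ 𝒟)
    (h : lam < val n α g₁ g₂ Q) : Q ⊆ {x | lam < M2D n α 𝒟 g₁ g₂ x} :=
  fun _ hx => lt_of_lt_of_le h (val_le_M2D hQ hx)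

lemma M2D_measurable (hn : 0 < n) (h𝒟 : IsDyadicGrid 𝒟) :
    Measurable (M2D n α 𝒟 g₁ g₂) := by
  haveI := (grid_countable hn h𝒟).to_subtype
  have heq : M2D n α 𝒟 g₁ g₂ = fun x =>
      ⨆ (Q : ↥𝒟), (Q : Set (Rn n)).indicator (fun _ => val n α g₁ g₂ Q) x := by
    funext x
    rw [M2D_eq, iSup_subtype']
    congr 1
    funext Q
    by_cases hx : x ∈ (Q : Set (Rn n))
    · rw [Set.indicator_of_mem hx, iSup_pos hx]
    · rw [Set.indicator_of_notMem hx, iSup_neg hx]; rfl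
  rw [heq]
  exact Measurable.iSup fun Q =>
    Measurable.indicator measurable_const (grid_measurable h𝒟 Q.2)

section Level

variable (hn : 0 < n) (h𝒟 : IsDyadicGrid 𝒟) {p : ℝ} (hp : 0 < p) (hp2 : p ≤ 2)
  (hpα : -(2 - α / (n:ℝ)) = -p)
  {lam : ℝ≥0∞} (ha0 : lam ≠ 0) (hat : lam ≠ ∞)

include hn h𝒟 hpα in
lemma val_vol {Q : Set (Rn n)} (hQ : Q ∈ 𝒟) (h : lam < val n α g₁ g₂ Q) :
    lam * volume Q ^ p ≤ (∫⁻ y in Q, g₁ y) * ∫⁻ y in Q, g₂ y := by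
  have h0 := grid_vol_ne_zero h𝒟 hQ
  have ht := grid_vol_ne_top h𝒟 hQ
  rw [val_eq hn h0 ht, hpα] at h
  calc lam * volume Q ^ p
      ≤ volume Q ^ (-p) * (∫⁻ y in Q, g₁ y) * (∫⁻ y in Q, g₂ y) * volume Q ^ p :=
        mul_le_mul_left h.le _
    _ = (∫⁻ y in Q, g₁ y) * (∫⁻ y in Q, g₂ y) * (volume Q ^ (-p) * volume Q ^ p) := by ring
    _ = (∫⁻ y in Q, g₁ y) * ∫⁻ y in Q, g₂ y := by
        rw [← ENNReal.rpow_add _ _ h0 ht, neg_add_cancel, ENNReal.rpow_zero, mul_one]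

include ha0 hat in
lemma div_of_mul_le {Z W : ℝ≥0∞} (h : lam * Z ≤ W) : Z ≤ lam⁻¹ * W := by
  calc Z = lam⁻¹ * (lam * Z) := by
        rw [← mul_assoc, ENNReal.inv_mul_cancel ha0 hat, one_mul]
    _ ≤ lam⁻¹ * W := mul_le_mul_right h _

include hn h𝒟 hp hpα ha0 hat in
lemma vol_le_of_val {Q : Set (Rn n)} (hQ : Q ∈ 𝒟) (h : lam < val n α g₁ g₂ Q) :
    volume Q ≤ (lam⁻¹ * ((∫⁻ x, g₁ x) * ∫⁻ x, g₂ x)) ^ (1/p) := by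
  have h1 : lam * volume Q ^ p ≤ (∫⁻ x, g₁ x) * ∫⁻ x, g₂ x :=
    le_trans (val_vol hn h𝒟 hpα hQ h)
      (mul_le_mul' (setLIntegral_le_lintegral _ _) (setLIntegral_le_lintegral _ _))
  have h2 : volume Q ^ p ≤ lam⁻¹ * ((∫⁻ x, g₁ x) * ∫⁻ x, g₂ x) := div_of_mul_le ha0 hat h1
  calc volume Q = (volume Q ^ p) ^ (1/p) := by
        rw [← ENNReal.rpow_mul, mul_one_div, div_self hp.ne', ENNReal.rpow_one]
    _ ≤ (lam⁻¹ * ((∫⁻ x, g₁ x) * ∫⁻ x, g₂ x)) ^ (1/p) :=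
        ENNReal.rpow_le_rpow h2 (by positivity)

include hn h𝒟 hp hpα ha0 hat in
lemma exists_max_valcube (hA : (∫⁻ x, g₁ x) ≠ ∞) (hB : (∫⁻ x, g₂ x) ≠ ∞)
    {x : Rn n} (hx : lam < M2D n α 𝒟 g₁ g₂ x) :
    ∃ P, P ∈ 𝒟 ∧ x ∈ P ∧ lam < val n α g₁ g₂ P ∧
      ∀ P' ∈ 𝒟, x ∈ P' → lam < val n α g₁ g₂ P' → P' ⊆ P := by
  set T : Set (Set (Rn n)) := {P | P ∈ 𝒟 ∧ x ∈ P ∧ lam < val n α g₁ g₂ P} with hT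
  have hTsub : T ⊆ 𝒟 := fun P hP => hP.1
  have hTx : ∀ R ∈ T, x ∈ R := fun R hR => hR.2.1
  have hTne : T.Nonempty := by
    obtain ⟨Q, hQ𝒟, hxQ, h⟩ := mem_level_iff.mp hx
    exact ⟨Q, hQ𝒟, hxQ, h⟩
  have hV : (lam⁻¹ * ((∫⁻ x, g₁ x) * ∫⁻ x, g₂ x)) ^ (1/p) ≠ ∞ := by
    refine ENNReal.rpow_ne_top_of_nonneg (by positivity) ?_
    exact ENNReal.mul_ne_top (ENNReal.inv_ne_top.2 ha0) (ENNReal.mul_ne_top hA hB)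
  obtain ⟨R₀, hR₀T, hmax⟩ := grid_exists_max hn h𝒟 T hTsub x hTx hTne hV
    (fun R hR => vol_le_of_val hn h𝒟 hp hpα ha0 hat hR.1 hR.2.2)
  exact ⟨R₀, hR₀T.1, hR₀T.2.1, hR₀T.2.2, fun P' hP'𝒟 hxP' hvalP' => hmax P' ⟨hP'𝒟, hxP', hvalP'⟩⟩

include hn h𝒟 hp hp2 hpα ha0 hat in
lemma core (hA : (∫⁻ x, g₁ x) ≠ ∞) (hB : (∫⁻ x, g₂ x) ≠ ∞)
    {R : Set (Rn n)} (hR𝒟 : R ∈ 𝒟) (hRΩ : R ⊆ {x | lam < M2D n α 𝒟 g₁ g₂ x})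
    (hno : ∀ P ∈ 𝒟, R ⊆ P → ¬ lam < val n α g₁ g₂ P) :
    lam * volume R ^ p ≤ 4 * ((∫⁻ y in R, g₁ y) * ∫⁻ y in R, g₂ y) := by
  classical
  have hΦ : ∀ x : Rn n, ∃ P, x ∈ R → (P ∈ 𝒟 ∧ x ∈ P ∧ lam < val n α g₁ g₂ P ∧
      ∀ P' ∈ 𝒟, x ∈ P' → lam < val n α g₁ g₂ P' → P' ⊆ P) := by
    intro x
    by_cases hx : x ∈ R
    · obtain ⟨P, h⟩ := exists_max_valcube hn h𝒟 hp hpα ha0 hat hA hB (hRΩ hx)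
      exact ⟨P, fun _ => h⟩
    · exact ⟨∅, fun h => absurd h hx⟩
  choose Φ hΦ using hΦ
  set PP : Set (Set (Rn n)) := Φ '' R with hPP
  have hP𝒟 : ∀ P ∈ PP, P ∈ 𝒟 := by rintro P ⟨x, hx, rfl⟩; exact (hΦ x hx).1
  have hPval : ∀ P ∈ PP, lam < val n α g₁ g₂ P := by
    rintro P ⟨x, hx, rfl⟩; exact (hΦ x hx).2.2.1
  have hPsubR : ∀ P ∈ PP, P ⊆ R := by
    rintro P ⟨x, hx, rfl⟩
    have hmem : x ∈ Φ x ∩ R := ⟨(hΦ x hx).2.1, hx⟩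
    rcases grid_nested h𝒟 ((hΦ x hx).1) hR𝒟 ⟨x, hmem⟩ with h | h
    · exact h
    · exact absurd ((hΦ x hx).2.2.1) (hno _ ((hΦ x hx).1) h)
  have hdisj : ∀ P ∈ PP, ∀ P' ∈ PP, P ≠ P' → Disjoint P P' := by
    rintro P ⟨x, hx, rfl⟩ P' ⟨y, hy, rfl⟩ hne
    rw [Set.disjoint_iff_inter_eq_empty]
    by_contra hcon
    have hnonempty : (Φ x ∩ Φ y).Nonempty := nonempty_iff_ne_empty.2 hcon
    rcases grid_nested h𝒟 ((hΦ x hx).1) ((hΦ y hy).1) hnonempty with h | h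
    · have : Φ y ⊆ Φ x := (hΦ x hx).2.2.2 (Φ y) ((hΦ y hy).1)
        (h (hΦ x hx).2.1) ((hΦ y hy).2.2.1)
      exact hne (Subset.antisymm h this)
    · have : Φ x ⊆ Φ y := (hΦ y hy).2.2.2 (Φ x) ((hΦ x hx).1)
        (h (hΦ y hy).2.1) ((hΦ x hx).2.2.1)
      exact hne (Subset.antisymm this h)
  haveI : Countable ↥PP :=
    ((grid_countable hn h𝒟).mono (fun P hP => hP𝒟 P hP)).to_subtype
  have hunion : (⋃ (P : ↥PP), (P : Set (Rn n))) = R := by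
    apply Subset.antisymm
    · exact iUnion_subset fun P => hPsubR _ P.2
    · intro x hx
      exact mem_iUnion.2 ⟨⟨Φ x, mem_image_of_mem Φ hx⟩, (hΦ x hx).2.1⟩
  have hpairwise : Pairwise (Function.onFun Disjoint (fun P : ↥PP => (P : Set (Rn n)))) := by
    intro P P' hne
    exact hdisj _ P.2 _ P'.2 (Subtype.coe_injective.ne hne)
  have hmeas : ∀ P : ↥PP, MeasurableSet (P : Set (Rn n)) :=
    fun P => grid_measurable h𝒟 (hP𝒟 _ P.2)
  have hvolsum : volume R = ∑' (P : ↥PP), volume (P : Set (Rn n)) := by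
    rw [← hunion, measure_iUnion hpairwise hmeas]
  have hXsum : (∫⁻ y in R, g₁ y) = ∑' (P : ↥PP), ∫⁻ y in (P : Set (Rn n)), g₁ y := by
    rw [← hunion, lintegral_iUnion hmeas hpairwise]
  have hYsum : (∫⁻ y in R, g₂ y) = ∑' (P : ↥PP), ∫⁻ y in (P : Set (Rn n)), g₂ y := by
    rw [← hunion, lintegral_iUnion hmeas hpairwise]
  -- half-power estimate
  have h2 : ∀ P : ↥PP, lam ^ (1/2:ℝ) * volume (P : Set (Rn n)) ^ (p/2) ≤
      (∫⁻ y in (P : Set (Rn n)), g₁ y) ^ (1/2:ℝ) *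
        (∫⁻ y in (P : Set (Rn n)), g₂ y) ^ (1/2:ℝ) := by
    intro P
    have hv := val_vol hn h𝒟 hpα (hP𝒟 _ P.2) (hPval _ P.2)
    calc lam ^ (1/2:ℝ) * volume (P : Set (Rn n)) ^ (p/2)
        = (lam * volume (P : Set (Rn n)) ^ p) ^ (1/2:ℝ) := by
          rw [ENNReal.mul_rpow_of_nonneg _ _ (by norm_num), ← ENNReal.rpow_mul]
          ring_nf
      _ ≤ ((∫⁻ y in (P : Set (Rn n)), g₁ y) * ∫⁻ y in (P : Set (Rn n)), g₂ y) ^ (1/2:ℝ) :=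
          ENNReal.rpow_le_rpow hv (by norm_num)
      _ = (∫⁻ y in (P : Set (Rn n)), g₁ y) ^ (1/2:ℝ) *
            (∫⁻ y in (P : Set (Rn n)), g₂ y) ^ (1/2:ℝ) :=
          ENNReal.mul_rpow_of_nonneg _ _ (by norm_num)
  have h1 : volume R ^ (p/2) ≤ ∑' (P : ↥PP), volume (P : Set (Rn n)) ^ (p/2) := by
    rw [hvolsum]
    exact rpow_tsum_le_tsum_rpow _ (by positivity) (by linarith)
  have h3 : lam ^ (1/2:ℝ) * volume R ^ (p/2) ≤
      2 * ((∫⁻ y in R, g₁ y) ^ (1/2:ℝ) * (∫⁻ y in R, g₂ y) ^ (1/2:ℝ)) := by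
    calc lam ^ (1/2:ℝ) * volume R ^ (p/2)
        ≤ lam ^ (1/2:ℝ) * ∑' (P : ↥PP), volume (P : Set (Rn n)) ^ (p/2) :=
          mul_le_mul_right h1 _
      _ = ∑' (P : ↥PP), lam ^ (1/2:ℝ) * volume (P : Set (Rn n)) ^ (p/2) :=
          ENNReal.tsum_mul_left.symm
      _ ≤ ∑' (P : ↥PP), (∫⁻ y in (P : Set (Rn n)), g₁ y) ^ (1/2:ℝ) *
            (∫⁻ y in (P : Set (Rn n)), g₂ y) ^ (1/2:ℝ) :=
          Summable.tsum_le_tsum h2 ENNReal.summable ENNReal.summable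
      _ ≤ 2 * ((∑' (P : ↥PP), ∫⁻ y in (P : Set (Rn n)), g₁ y) ^ (1/2:ℝ) *
            (∑' (P : ↥PP), ∫⁻ y in (P : Set (Rn n)), g₂ y) ^ (1/2:ℝ)) :=
          tsum_half_mul_half_le _ _
      _ = 2 * ((∫⁻ y in R, g₁ y) ^ (1/2:ℝ) * (∫⁻ y in R, g₂ y) ^ (1/2:ℝ)) := by
          rw [← hXsum, ← hYsum]
  -- square
  have hsq : lam * volume R ^ p
      = (lam ^ (1/2:ℝ) * volume R ^ (p/2)) * (lam ^ (1/2:ℝ) * volume R ^ (p/2)) := by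
    rw [mul_mul_mul_comm, ← ENNReal.rpow_add_of_nonneg _ _ (by norm_num) (by norm_num),
      ← ENNReal.rpow_add_of_nonneg _ _ (by positivity) (by positivity)]
    norm_num
  have hrhs : (2 * ((∫⁻ y in R, g₁ y) ^ (1/2:ℝ) * (∫⁻ y in R, g₂ y) ^ (1/2:ℝ))) *
      (2 * ((∫⁻ y in R, g₁ y) ^ (1/2:ℝ) * (∫⁻ y in R, g₂ y) ^ (1/2:ℝ)))
      = 4 * ((∫⁻ y in R, g₁ y) * ∫⁻ y in R, g₂ y) := by
    have hX : (∫⁻ y in R, g₁ y) ^ (1/2:ℝ) * (∫⁻ y in R, g₁ y) ^ (1/2:ℝ)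
        = ∫⁻ y in R, g₁ y := by
      rw [← ENNReal.rpow_add_of_nonneg _ _ (by norm_num) (by norm_num)]
      norm_num
    have hY : (∫⁻ y in R, g₂ y) ^ (1/2:ℝ) * (∫⁻ y in R, g₂ y) ^ (1/2:ℝ)
        = ∫⁻ y in R, g₂ y := by
      rw [← ENNReal.rpow_add_of_nonneg _ _ (by norm_num) (by norm_num)]
      norm_num
    calc (2 * ((∫⁻ y in R, g₁ y) ^ (1/2:ℝ) * (∫⁻ y in R, g₂ y) ^ (1/2:ℝ))) *
        (2 * ((∫⁻ y in R, g₁ y) ^ (1/2:ℝ) * (∫⁻ y in R, g₂ y) ^ (1/2:ℝ)))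
        = (2*2) * (((∫⁻ y in R, g₁ y) ^ (1/2:ℝ) * (∫⁻ y in R, g₁ y) ^ (1/2:ℝ)) *
            ((∫⁻ y in R, g₂ y) ^ (1/2:ℝ) * (∫⁻ y in R, g₂ y) ^ (1/2:ℝ))) := by ring
      _ = 4 * ((∫⁻ y in R, g₁ y) * ∫⁻ y in R, g₂ y) := by
          rw [hX, hY]; norm_num
  rw [hsq, ← hrhs]
  exact mul_le_mul' h3 h3


include hn h𝒟 hp hp2 hpα ha0 hat in
lemma vol_bound_of_subset_level (hA : (∫⁻ x, g₁ x) ≠ ∞) (hB : (∫⁻ x, g₂ x) ≠ ∞)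
    {R : Set (Rn n)} (hR𝒟 : R ∈ 𝒟) (hRΩ : R ⊆ {x | lam < M2D n α 𝒟 g₁ g₂ x}) :
    volume R ≤ (lam⁻¹ * (4 * ((∫⁻ x, g₁ x) * ∫⁻ x, g₂ x))) ^ (1/p) := by
  have h4 : (lam⁻¹ * ((∫⁻ x, g₁ x) * ∫⁻ x, g₂ x)) ≤
      (lam⁻¹ * (4 * ((∫⁻ x, g₁ x) * ∫⁻ x, g₂ x))) :=
    mul_le_mul_right (le_mul_of_one_le_left (zero_le) (by norm_num)) _
  by_cases hex : ∃ P ∈ 𝒟, R ⊆ P ∧ lam < val n α g₁ g₂ P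
  · obtain ⟨P, hP𝒟, hRP, hval⟩ := hex
    calc volume R ≤ volume P := measure_mono hRP
      _ ≤ (lam⁻¹ * ((∫⁻ x, g₁ x) * ∫⁻ x, g₂ x)) ^ (1/p) :=
          vol_le_of_val hn h𝒟 hp hpα ha0 hat hP𝒟 hval
      _ ≤ (lam⁻¹ * (4 * ((∫⁻ x, g₁ x) * ∫⁻ x, g₂ x))) ^ (1/p) :=
          ENNReal.rpow_le_rpow h4 (by positivity)
  · push_neg at hex
    have hcore := core hn h𝒟 hp hp2 hpα ha0 hat hA hB hR𝒟 hRΩ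
      (fun P hP hRP => not_lt.2 (hex P hP hRP))
    have h1 : lam * volume R ^ p ≤ 4 * ((∫⁻ x, g₁ x) * ∫⁻ x, g₂ x) :=
      le_trans hcore (mul_le_mul_right
        (mul_le_mul' (setLIntegral_le_lintegral _ _) (setLIntegral_le_lintegral _ _)) _)
    have h2 := div_of_mul_le ha0 hat h1
    calc volume R = (volume R ^ p) ^ (1/p) := by
          rw [← ENNReal.rpow_mul, mul_one_div, div_self hp.ne', ENNReal.rpow_one]
      _ ≤ (lam⁻¹ * (4 * ((∫⁻ x, g₁ x) * ∫⁻ x, g₂ x))) ^ (1/p) :=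
          ENNReal.rpow_le_rpow h2 (by positivity)

include hn h𝒟 hp hp2 hpα ha0 hat in
lemma exists_maximal_levelcube (hA : (∫⁻ x, g₁ x) ≠ ∞) (hB : (∫⁻ x, g₂ x) ≠ ∞)
    {x : Rn n} (hx : lam < M2D n α 𝒟 g₁ g₂ x) :
    ∃ Q, Q ∈ 𝒟 ∧ x ∈ Q ∧ Q ⊆ {y | lam < M2D n α 𝒟 g₁ g₂ y} ∧
      ∀ R ∈ 𝒟, Q ⊆ R → R ⊆ {y | lam < M2D n α 𝒟 g₁ g₂ y} → R = Q := by
  set T : Set (Set (Rn n)) :=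
    {R | R ∈ 𝒟 ∧ x ∈ R ∧ R ⊆ {y | lam < M2D n α 𝒟 g₁ g₂ y}} with hT
  have hTsub : T ⊆ 𝒟 := fun P hP => hP.1
  have hTx : ∀ R ∈ T, x ∈ R := fun R hR => hR.2.1
  have hTne : T.Nonempty := by
    obtain ⟨Q, hQ𝒟, hxQ, h⟩ := mem_level_iff.mp hx
    exact ⟨Q, hQ𝒟, hxQ, valcube_subset_level hQ𝒟 h⟩
  have hV : (lam⁻¹ * (4 * ((∫⁻ x, g₁ x) * ∫⁻ x, g₂ x))) ^ (1/p) ≠ ∞ := by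
    refine ENNReal.rpow_ne_top_of_nonneg (by positivity) ?_
    exact ENNReal.mul_ne_top (ENNReal.inv_ne_top.2 ha0)
      (ENNReal.mul_ne_top (by norm_num) (ENNReal.mul_ne_top hA hB))
  obtain ⟨R₀, hR₀T, hmax⟩ := grid_exists_max hn h𝒟 T hTsub x hTx hTne hV
    (fun R hR => vol_bound_of_subset_level hn h𝒟 hp hp2 hpα ha0 hat hA hB hR.1 hR.2.2)
  refine ⟨R₀, hR₀T.1, hR₀T.2.1, hR₀T.2.2, ?_⟩
  intro R hR𝒟 hR₀R hRΩ
  have hRT : R ∈ T := ⟨hR𝒟, hR₀R hR₀T.2.1, hRΩ⟩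
  exact Subset.antisymm (hmax R hRT) hR₀R

include hn h𝒟 hp hp2 hpα ha0 hat in
lemma key2 (hA : (∫⁻ x, g₁ x) ≠ ∞) (hB : (∫⁻ x, g₂ x) ≠ ∞)
    {Q : Set (Rn n)} (hQ𝒟 : Q ∈ 𝒟) (hQΩ : Q ⊆ {y | lam < M2D n α 𝒟 g₁ g₂ y})
    (hmax : ∀ R ∈ 𝒟, Q ⊆ R → R ⊆ {y | lam < M2D n α 𝒟 g₁ g₂ y} → R = Q) :
    lam * volume Q ^ p ≤ 4 * ((∫⁻ y in Q, g₁ y) * ∫⁻ y in Q, g₂ y) := by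
  by_cases hex : ∃ P ∈ 𝒟, Q ⊆ P ∧ lam < val n α g₁ g₂ P
  · obtain ⟨P, hP𝒟, hQP, hval⟩ := hex
    have hPQ : P = Q := hmax P hP𝒟 hQP (valcube_subset_level hP𝒟 hval)
    subst hPQ
    exact le_trans (val_vol hn h𝒟 hpα hP𝒟 hval)
      (le_mul_of_one_le_left (zero_le) (by norm_num))
  · push_neg at hex
    exact core hn h𝒟 hp hp2 hpα ha0 hat hA hB hQ𝒟 hQΩ
      (fun P hP hQP => not_lt.2 (hex P hP hQP))

include hn h𝒟 hp hp2 hpα ha0 hat in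
lemma key2' (hA : (∫⁻ x, g₁ x) ≠ ∞) (hB : (∫⁻ x, g₂ x) ≠ ∞)
    {Q : Set (Rn n)} (hQ𝒟 : Q ∈ 𝒟) (hQΩ : Q ⊆ {y | lam < M2D n α 𝒟 g₁ g₂ y})
    (hmax : ∀ R ∈ 𝒟, Q ⊆ R → R ⊆ {y | lam < M2D n α 𝒟 g₁ g₂ y} → R = Q) :
    lam ≤ 4 * (volume Q ^ (-p) * (∫⁻ y in Q, g₁ y) * ∫⁻ y in Q, g₂ y) := by
  have h0 := grid_vol_ne_zero h𝒟 hQ𝒟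
  have ht := grid_vol_ne_top h𝒟 hQ𝒟
  calc lam = lam * volume Q ^ p * volume Q ^ (-p) := by
        rw [mul_assoc, ← ENNReal.rpow_add _ _ h0 ht, add_neg_cancel,
          ENNReal.rpow_zero, mul_one]
    _ ≤ (4 * ((∫⁻ y in Q, g₁ y) * ∫⁻ y in Q, g₂ y)) * volume Q ^ (-p) :=
        mul_le_mul_left (key2 hn h𝒟 hp hp2 hpα ha0 hat hA hB hQ𝒟 hQΩ hmax) _
    _ = 4 * (volume Q ^ (-p) * (∫⁻ y in Q, g₁ y) * ∫⁻ y in Q, g₂ y) := by ring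

-- the family of maximal cubes of the level set
lemma SS_disjoint {Q Q' : Set (Rn n)}
    (hQ : Q ∈ 𝒟 ∧ Q ⊆ {y | lam < M2D n α 𝒟 g₁ g₂ y} ∧
      ∀ R ∈ 𝒟, Q ⊆ R → R ⊆ {y | lam < M2D n α 𝒟 g₁ g₂ y} → R = Q)
    (hQ' : Q' ∈ 𝒟 ∧ Q' ⊆ {y | lam < M2D n α 𝒟 g₁ g₂ y} ∧
      ∀ R ∈ 𝒟, Q' ⊆ R → R ⊆ {y | lam < M2D n α 𝒟 g₁ g₂ y} → R = Q')
    (h𝒟' : IsDyadicGrid 𝒟) (hne : Q ≠ Q') : Disjoint Q Q' := by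
  rw [Set.disjoint_iff_inter_eq_empty]
  by_contra hcon
  rcases grid_nested h𝒟' hQ.1 hQ'.1 (nonempty_iff_ne_empty.2 hcon) with h | h
  · exact hne (hQ.2.2 Q' hQ'.1 h hQ'.2.1).symm
  · exact hne (hQ'.2.2 Q hQ.1 h hQ.2.1)

include hn h𝒟 hp hp2 hpα ha0 hat in
lemma level_vol_le (hA : (∫⁻ x, g₁ x) ≠ ∞) (hB : (∫⁻ x, g₂ x) ≠ ∞) :
    volume {y | lam < M2D n α 𝒟 g₁ g₂ y} ≤
      2 * ((lam⁻¹ * (4 * ((∫⁻ x, g₁ x) * ∫⁻ x, g₂ x))) ^ (1/p)) := by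
  classical
  set SS : Set (Set (Rn n)) :=
    {Q | Q ∈ 𝒟 ∧ Q ⊆ {y | lam < M2D n α 𝒟 g₁ g₂ y} ∧
      ∀ R ∈ 𝒟, Q ⊆ R → R ⊆ {y | lam < M2D n α 𝒟 g₁ g₂ y} → R = Q} with hSS
  haveI : Countable ↥SS := ((grid_countable hn h𝒟).mono (fun Q hQ => hQ.1)).to_subtype
  have hcover : {y | lam < M2D n α 𝒟 g₁ g₂ y} ⊆ ⋃ (Q : ↥SS), (Q : Set (Rn n)) := by
    intro x hx
    obtain ⟨Q, hQ𝒟, hxQ, hQΩ, hQmax⟩ :=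
      exists_maximal_levelcube hn h𝒟 hp hp2 hpα ha0 hat hA hB hx
    exact mem_iUnion.2 ⟨⟨Q, hQ𝒟, hQΩ, hQmax⟩, hxQ⟩
  have hpairwise : Pairwise (Function.onFun Disjoint (fun Q : ↥SS => (Q : Set (Rn n)))) :=
    fun Q Q' hne => SS_disjoint Q.2 Q'.2 h𝒟 (Subtype.coe_injective.ne hne)
  have hmeas : ∀ Q : ↥SS, MeasurableSet (Q : Set (Rn n)) :=
    fun Q => grid_measurable h𝒟 Q.2.1
  have hXsum : ∑' (Q : ↥SS), ∫⁻ y in (Q : Set (Rn n)), g₁ y ≤ ∫⁻ x, g₁ x := by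
    rw [← lintegral_iUnion hmeas hpairwise]
    exact setLIntegral_le_lintegral _ _
  have hYsum : ∑' (Q : ↥SS), ∫⁻ y in (Q : Set (Rn n)), g₂ y ≤ ∫⁻ x, g₂ x := by
    rw [← lintegral_iUnion hmeas hpairwise]
    exact setLIntegral_le_lintegral _ _
  have h2p : (1:ℝ) ≤ 2/p := (one_le_div hp).2 hp2
  have hvolQ : ∀ Q : ↥SS, volume (Q : Set (Rn n)) ≤ (lam⁻¹ * 4) ^ (1/p) *
      (((∫⁻ y in (Q : Set (Rn n)), g₁ y) ^ (2/p)) ^ (1/2:ℝ) *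
        ((∫⁻ y in (Q : Set (Rn n)), g₂ y) ^ (2/p)) ^ (1/2:ℝ)) := by
    intro Q
    have hk := key2 hn h𝒟 hp hp2 hpα ha0 hat hA hB Q.2.1 Q.2.2.1 Q.2.2.2
    have h1 : volume (Q : Set (Rn n)) ^ p ≤
        (lam⁻¹ * 4) * ((∫⁻ y in (Q : Set (Rn n)), g₁ y) * ∫⁻ y in (Q : Set (Rn n)), g₂ y) := by
      have := div_of_mul_le ha0 hat hk
      rwa [← mul_assoc] at this
    have hXhalf : ∀ Z : ℝ≥0∞, (Z ^ (2/p)) ^ (1/2:ℝ) = Z ^ (1/p) := by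
      intro Z
      rw [← ENNReal.rpow_mul]
      norm_num
    rw [hXhalf, hXhalf]
    calc volume (Q : Set (Rn n)) = (volume (Q : Set (Rn n)) ^ p) ^ (1/p) := by
          rw [← ENNReal.rpow_mul, mul_one_div, div_self hp.ne', ENNReal.rpow_one]
      _ ≤ ((lam⁻¹ * 4) *
            ((∫⁻ y in (Q : Set (Rn n)), g₁ y) * ∫⁻ y in (Q : Set (Rn n)), g₂ y)) ^ (1/p) :=
          ENNReal.rpow_le_rpow h1 (by positivity)
      _ = (lam⁻¹ * 4) ^ (1/p) *
            ((∫⁻ y in (Q : Set (Rn n)), g₁ y) ^ (1/p) *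
              (∫⁻ y in (Q : Set (Rn n)), g₂ y) ^ (1/p)) := by
          simp only [ENNReal.mul_rpow_of_nonneg _ _ (by positivity : (0:ℝ) ≤ 1/p)]
  have hXp : ∑' (Q : ↥SS), ((∫⁻ y in (Q : Set (Rn n)), g₁ y) ^ (2/p)) ≤
      (∫⁻ x, g₁ x) ^ (2/p) :=
    le_trans (tsum_rpow_le_rpow_tsum _ h2p) (ENNReal.rpow_le_rpow hXsum (by positivity))
  have hYp : ∑' (Q : ↥SS), ((∫⁻ y in (Q : Set (Rn n)), g₂ y) ^ (2/p)) ≤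
      (∫⁻ x, g₂ x) ^ (2/p) :=
    le_trans (tsum_rpow_le_rpow_tsum _ h2p) (ENNReal.rpow_le_rpow hYsum (by positivity))
  have hXhalf : ∀ Z : ℝ≥0∞, (Z ^ (2/p)) ^ (1/2:ℝ) = Z ^ (1/p) := by
    intro Z
    rw [← ENNReal.rpow_mul]
    norm_num
  calc volume {y | lam < M2D n α 𝒟 g₁ g₂ y}
      ≤ volume (⋃ (Q : ↥SS), (Q : Set (Rn n))) := measure_mono hcover
    _ ≤ ∑' (Q : ↥SS), volume (Q : Set (Rn n)) := measure_iUnion_le _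
    _ ≤ ∑' (Q : ↥SS), (lam⁻¹ * 4) ^ (1/p) *
          (((∫⁻ y in (Q : Set (Rn n)), g₁ y) ^ (2/p)) ^ (1/2:ℝ) *
            ((∫⁻ y in (Q : Set (Rn n)), g₂ y) ^ (2/p)) ^ (1/2:ℝ)) :=
        Summable.tsum_le_tsum hvolQ ENNReal.summable ENNReal.summable
    _ = (lam⁻¹ * 4) ^ (1/p) * ∑' (Q : ↥SS),
          ((∫⁻ y in (Q : Set (Rn n)), g₁ y) ^ (2/p)) ^ (1/2:ℝ) *
            ((∫⁻ y in (Q : Set (Rn n)), g₂ y) ^ (2/p)) ^ (1/2:ℝ) := ENNReal.tsum_mul_left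
    _ ≤ (lam⁻¹ * 4) ^ (1/p) *
          (2 * ((∑' (Q : ↥SS), (∫⁻ y in (Q : Set (Rn n)), g₁ y) ^ (2/p)) ^ (1/2:ℝ) *
            (∑' (Q : ↥SS), (∫⁻ y in (Q : Set (Rn n)), g₂ y) ^ (2/p)) ^ (1/2:ℝ))) :=
        mul_le_mul_right (tsum_half_mul_half_le _ _) _
    _ ≤ (lam⁻¹ * 4) ^ (1/p) *
          (2 * (((∫⁻ x, g₁ x) ^ (2/p)) ^ (1/2:ℝ) * ((∫⁻ x, g₂ x) ^ (2/p)) ^ (1/2:ℝ))) := by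
        refine mul_le_mul_right (mul_le_mul_right (mul_le_mul' ?_ ?_) _) _
        · exact ENNReal.rpow_le_rpow hXp (by norm_num)
        · exact ENNReal.rpow_le_rpow hYp (by norm_num)
    _ = 2 * ((lam⁻¹ * (4 * ((∫⁻ x, g₁ x) * ∫⁻ x, g₂ x))) ^ (1/p)) := by
        rw [hXhalf, hXhalf]
        simp only [ENNReal.mul_rpow_of_nonneg _ _ (by positivity : (0:ℝ) ≤ 1/p)]
        ring

end Level



end

section
variable {n : ℕ} {𝒟 : Set (Set (Rn n))} {α : ℝ} {g₁ g₂ : Rn n → ℝ≥0∞}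

lemma M2D_zero (h0 : (∫⁻ x, g₁ x) = 0) (x : Rn n) : M2D n α 𝒟 g₁ g₂ x = 0 := by
  refine le_antisymm ?_ (zero_le)
  rw [M2D_eq]
  refine iSup_le fun Q => iSup_le fun hQ => iSup_le fun hx => ?_
  have hX : (∫⁻ y in Q, g₁ y) = 0 :=
    le_antisymm (h0 ▸ setLIntegral_le_lintegral _ _) (zero_le)
  rw [val, hX, mul_zero, zero_mul]

lemma M2D_zero' (h0 : (∫⁻ x, g₂ x) = 0) (x : Rn n) : M2D n α 𝒟 g₁ g₂ x = 0 := by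
  refine le_antisymm ?_ (zero_le)
  rw [M2D_eq]
  refine iSup_le fun Q => iSup_le fun hQ => iSup_le fun hx => ?_
  have hY : (∫⁻ y in Q, g₂ y) = 0 :=
    le_antisymm (h0 ▸ setLIntegral_le_lintegral _ _) (zero_le)
  rw [val, hY, mul_zero, mul_zero]
end

end Stmt18Aux

open Stmt18Aux Filter Topology

/-- the sparse form controls `∫ (ℳ^𝒟_α(g₁,g₂))^q v`. -/
theorem stmt18 (n : ℕ) (hn : 0 < n) (α : ℝ) (hα0 : 0 ≤ α) (hα : α < 2 * n)
    (q : ℝ) (hq : 0 < q) :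
    ∃ C : ℝ≥0∞, C ≠ ∞ ∧
      ∀ (𝒟 : Set (Set (Rn n))), IsDyadicGrid 𝒟 →
      ∀ (v g₁ g₂ : Rn n → ℝ≥0∞), Measurable v → Measurable g₁ → Measurable g₂ →
        (∫⁻ x, g₁ x) ≠ ∞ → (∫⁻ x, g₂ x) ≠ ∞ →
        let a : ℝ≥0∞ := 2 ^ (((2:ℝ) - α / n) * ((n:ℝ) + 1))
        let Ω : ℤ → Set (Rn n) := fun k => {x | a ^ k < M2D n α 𝒟 g₁ g₂ x}
        let S : ℤ → Set (Set (Rn n)) := fun k =>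
          {Q | Q ∈ 𝒟 ∧ Q ⊆ Ω k ∧ ∀ R ∈ 𝒟, Q ⊆ R → R ⊆ Ω k → R = Q}
        (∫⁻ x, M2D n α 𝒟 g₁ g₂ x ^ q * v x)
          ≤ C * ∑' (k : ℤ), ∑' (Q : ↥(S k)),
              (volume (Q : Set (Rn n)) ^ (α / (n:ℝ) - 2) *
                  (∫⁻ y in (Q : Set (Rn n)), g₁ y) *
                  (∫⁻ y in (Q : Set (Rn n)), g₂ y)) ^ q *
                wtI v ((Q : Set (Rn n)) \ Ω (k+1)) := by
  classical
  have hnR : (0:ℝ) < n := Nat.cast_pos.mpr hn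
  set p : ℝ := 2 - α / n with hpdef
  have hp : 0 < p := by
    have : α / n < 2 := by
      rw [div_lt_iff₀ hnR]
      linarith
    simp only [hpdef]; linarith
  have hp2 : p ≤ 2 := by
    have : 0 ≤ α / n := div_nonneg hα0 hnR.le
    simp only [hpdef]; linarith
  have hpα : -(2 - α / (n:ℝ)) = -p := rfl
  have hpα' : α / (n:ℝ) - 2 = -p := by simp only [hpdef]; ring
  set r : ℝ := ((2:ℝ) - α / n) * ((n:ℝ) + 1) with hrdef
  have hr0 : 0 < r := mul_pos (by simpa [hpdef] using hp) (by linarith)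
  refine ⟨(4 * 2 ^ r) ^ q, ?_, ?_⟩
  · refine ENNReal.rpow_ne_top_of_nonneg hq.le (ENNReal.mul_ne_top (by norm_num) ?_)
    simp [ENNReal.rpow_eq_top_iff]
  intro 𝒟 h𝒟 v g₁ g₂ hv hg₁ hg₂ hA hB
  intro a Ω S
  have ha : a = (2:ℝ≥0∞) ^ r := rfl
  set M := M2D n α 𝒟 g₁ g₂ with hM
  -- trivial cases
  by_cases hA0 : (∫⁻ x, g₁ x) = 0
  · have hM0 : ∀ x, M x = 0 := M2D_zero hA0
    have : ∀ x, M x ^ q * v x = 0 := fun x => by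
      rw [hM0 x, ENNReal.zero_rpow_of_pos hq, zero_mul]
    simp only [hM]  at this
    rw [show (∫⁻ x, M2D n α 𝒟 g₁ g₂ x ^ q * v x) = 0 by
      rw [← lintegral_zero]; exact lintegral_congr this]
    exact zero_le
  by_cases hB0 : (∫⁻ x, g₂ x) = 0
  · have hM0 : ∀ x, M x = 0 := M2D_zero' hB0
    have : ∀ x, M x ^ q * v x = 0 := fun x => by
      rw [hM0 x, ENNReal.zero_rpow_of_pos hq, zero_mul]
    simp only [hM] at this
    rw [show (∫⁻ x, M2D n α 𝒟 g₁ g₂ x ^ q * v x) = 0 by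
      rw [← lintegral_zero]; exact lintegral_congr this]
    exact zero_le
  -- basic facts about a
  have hak : ∀ k : ℤ, a ^ k = (2:ℝ≥0∞) ^ (r * (k:ℝ)) := by
    intro k
    rw [ha, ← ENNReal.rpow_intCast ((2:ℝ≥0∞) ^ r) k, ← ENNReal.rpow_mul]
  have ha0 : ∀ k : ℤ, a ^ k ≠ 0 := by
    intro k; rw [hak k]
    simp [ENNReal.rpow_eq_zero_iff]
  have hat : ∀ k : ℤ, a ^ k ≠ ∞ := by
    intro k; rw [hak k]
    simp [ENNReal.rpow_eq_top_iff]
  have hamono : ∀ {k m : ℤ}, k ≤ m → a ^ k ≤ a ^ m := by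
    intro k m hkm
    rw [hak k, hak m]
    exact ENNReal.rpow_le_rpow_of_exponent_le (by norm_num)
      (mul_le_mul_of_nonneg_left (by exact_mod_cast hkm) hr0.le)
  have hΩmono : ∀ {k m : ℤ}, k ≤ m → Ω m ⊆ Ω k := by
    intro k m hkm x hx
    exact lt_of_le_of_lt (hamono hkm) hx
  have hMmeas : Measurable M := M2D_measurable hn h𝒟
  have hMqv : Measurable fun x => M x ^ q * v x :=
    (ENNReal.continuous_rpow_const.measurable.comp hMmeas).mul hv
  have hΩmeas : ∀ k : ℤ, MeasurableSet (Ω k) :=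
    fun k => measurableSet_lt measurable_const hMmeas
  -- countability of S k
  have hSsub : ∀ k : ℤ, S k ⊆ 𝒟 := fun k Q hQ => hQ.1
  haveI hScnt : ∀ k : ℤ, Countable ↥(S k) :=
    fun k => ((grid_countable hn h𝒟).mono (hSsub k)).to_subtype
  -- Part 1 : the top intersection is null
  have hInter : volume (⋂ k : ℤ, Ω k) = 0 := by
    have hbound : ∀ j : ℕ, volume (⋂ k : ℤ, Ω k) ≤
        2 * (((a ^ (j:ℤ))⁻¹ * (4 * ((∫⁻ x, g₁ x) * ∫⁻ x, g₂ x))) ^ (1/p)) := by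
      intro j
      refine le_trans (measure_mono (iInter_subset _ (j:ℤ))) ?_
      exact level_vol_le hn h𝒟 hp hp2 hpα (ha0 _) (hat _) hA hB
    set c' : ℝ≥0∞ := (4 * ((∫⁻ x, g₁ x) * ∫⁻ x, g₂ x)) ^ (1/p) with hc'
    have hc't : c' ≠ ∞ := by
      refine ENNReal.rpow_ne_top_of_nonneg (by positivity) ?_
      exact ENNReal.mul_ne_top (by norm_num) (ENNReal.mul_ne_top hA hB)
    set d : ℝ≥0∞ := (2:ℝ≥0∞) ^ (-(r/p)) with hd
    have hd1 : d < 1 := ENNReal.rpow_lt_one_of_one_lt_of_neg (by norm_num)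
      (by rw [neg_lt, neg_zero]; positivity)
    have heq : ∀ j : ℕ, ((a ^ (j:ℤ))⁻¹ * (4 * ((∫⁻ x, g₁ x) * ∫⁻ x, g₂ x))) ^ (1/p)
        = d ^ j * c' := by
      intro j
      rw [ENNReal.mul_rpow_of_nonneg _ _ (by positivity), hak, ← ENNReal.rpow_neg,
        ← ENNReal.rpow_mul, hc', hd]
      congr 1
      rw [← ENNReal.rpow_natCast ((2:ℝ≥0∞) ^ (-(r/p))) j, ← ENNReal.rpow_mul]
      congr 1
      field_simp; simp
    have htend : Tendsto (fun j : ℕ => 2 * (((a ^ (j:ℤ))⁻¹ *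
        (4 * ((∫⁻ x, g₁ x) * ∫⁻ x, g₂ x))) ^ (1/p))) atTop (𝓝 0) := by
      simp_rw [heq]
      have h1 : Tendsto (fun j : ℕ => d ^ j) atTop (𝓝 0) :=
        ENNReal.tendsto_pow_atTop_nhds_zero_of_lt_one hd1
      have h2 : Tendsto (fun j : ℕ => d ^ j * c') atTop (𝓝 (0 * c')) :=
        ENNReal.Tendsto.mul_const h1 (Or.inr hc't)
      rw [zero_mul] at h2
      have h3 : Tendsto (fun j : ℕ => 2 * (d ^ j * c')) atTop (𝓝 (2 * 0)) :=
        ENNReal.Tendsto.const_mul h2 (Or.inr (by simp))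
      rwa [mul_zero] at h3
    exact le_antisymm (ge_of_tendsto htend (Eventually.of_forall hbound)) (zero_le)
  -- pointwise decomposition
  have hexistslow : ∀ x : Rn n, M x ≠ 0 → ∃ k : ℤ, x ∈ Ω k := by
    intro x hx
    have hpos : 0 < M x := pos_iff_ne_zero.mpr hx
    have hinv : a⁻¹ < 1 := ENNReal.inv_lt_one.2 (by
      rw [ha]; exact ENNReal.one_lt_rpow (by norm_num) hr0)
    have htend : Tendsto (fun j : ℕ => a⁻¹ ^ j) atTop (𝓝 0) :=
      ENNReal.tendsto_pow_atTop_nhds_zero_of_lt_one hinv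
    have hev : ∀ᶠ j : ℕ in atTop, a⁻¹ ^ j < M x := htend.eventually_lt_const hpos
    obtain ⟨j, hj⟩ := hev.exists
    refine ⟨-(j:ℤ), ?_⟩
    have hzz : a ^ (-(j:ℤ)) = a⁻¹ ^ j := by
      rw [← ENNReal.rpow_intCast a (-(j:ℤ)), ← ENNReal.rpow_natCast a⁻¹ j,
        ENNReal.inv_rpow, ← ENNReal.rpow_neg]
      norm_num
    show a ^ (-(j:ℤ)) < M x
    rw [hzz]
    exact hj
  have hpoint : ∀ x, M x ^ q * v x ≤
      (∑' k : ℤ, (Ω k \ Ω (k+1)).indicator (fun y => M y ^ q * v y) x) +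
        (⋂ k : ℤ, Ω k).indicator (fun y => M y ^ q * v y) x := by
    intro x
    by_cases hM0 : M x = 0
    · rw [hM0, ENNReal.zero_rpow_of_pos hq, zero_mul]
      exact zero_le
    by_cases hxint : x ∈ ⋂ k : ℤ, Ω k
    · calc M x ^ q * v x = (⋂ k : ℤ, Ω k).indicator (fun y => M y ^ q * v y) x :=
            (Set.indicator_of_mem hxint (fun y => M y ^ q * v y)).symm
        _ ≤ _ := le_add_self
    · obtain ⟨k₁, hk₁⟩ := hexistslow x hM0
      have hxnot : ∃ k : ℤ, x ∉ Ω k := by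
        by_contra hcon
        push_neg at hcon
        exact hxint (mem_iInter.2 hcon)
      obtain ⟨k₀, hk₀⟩ := hxnot
      have hbdd : ∀ z : ℤ, x ∈ Ω z → z ≤ k₀ := by
        intro z hz
        by_contra hzk
        push_neg at hzk
        exact hk₀ (hΩmono hzk.le hz)
      obtain ⟨k, hk, hkmax⟩ := Int.exists_greatest_of_bdd ⟨k₀, hbdd⟩ ⟨k₁, hk₁⟩
      have hknot : x ∉ Ω (k+1) := fun hcon => by
        have := hkmax _ hcon; omega
      have hmem : x ∈ Ω k \ Ω (k+1) := ⟨hk, hknot⟩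
      calc M x ^ q * v x
          = (Ω k \ Ω (k+1)).indicator (fun y => M y ^ q * v y) x :=
            (Set.indicator_of_mem hmem (fun y => M y ^ q * v y)).symm
        _ ≤ ∑' k : ℤ, (Ω k \ Ω (k+1)).indicator (fun y => M y ^ q * v y) x :=
            ENNReal.le_tsum k
        _ ≤ _ := le_self_add
  -- per-level estimate
  have hstep : ∀ k : ℤ, (∫⁻ x in Ω k \ Ω (k+1), M x ^ q * v x) ≤
      ∑' (Q : ↥(S k)), (4 * 2 ^ r) ^ q *
        ((volume (Q : Set (Rn n)) ^ (α / (n:ℝ) - 2) *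
            (∫⁻ y in (Q : Set (Rn n)), g₁ y) *
            (∫⁻ y in (Q : Set (Rn n)), g₂ y)) ^ q *
          wtI v ((Q : Set (Rn n)) \ Ω (k+1))) := by
    intro k
    have hcover : Ω k ⊆ ⋃ (Q : ↥(S k)), (Q : Set (Rn n)) := by
      intro x hx
      obtain ⟨Q, hQ𝒟, hxQ, hQΩ, hQmax⟩ :=
        exists_maximal_levelcube hn h𝒟 hp hp2 hpα (ha0 k) (hat k) hA hB hx
      exact mem_iUnion.2 ⟨⟨Q, hQ𝒟, hQΩ, hQmax⟩, hxQ⟩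
    have hkey : ∀ Q : ↥(S k), (a ^ (k+1)) ^ q ≤ (4 * 2 ^ r) ^ q *
        (volume (Q : Set (Rn n)) ^ (α / (n:ℝ) - 2) *
            (∫⁻ y in (Q : Set (Rn n)), g₁ y) *
            (∫⁻ y in (Q : Set (Rn n)), g₂ y)) ^ q := by
      intro Q
      have hk2 := key2' hn h𝒟 hp hp2 hpα (ha0 k) (hat k) hA hB Q.2.1 Q.2.2.1 Q.2.2.2
      rw [← hpα'] at hk2
      have hsplit : a ^ (k+1) = a ^ k * 2 ^ r := by
        rw [hak, hak]
        rw [← ENNReal.rpow_add _ _ (by norm_num) (by norm_num)]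
        congr 1
        push_cast
        ring
      have h1 : a ^ (k+1) ≤ (4 * 2 ^ r) *
          (volume (Q : Set (Rn n)) ^ (α / (n:ℝ) - 2) *
            (∫⁻ y in (Q : Set (Rn n)), g₁ y) *
            (∫⁻ y in (Q : Set (Rn n)), g₂ y)) := by
        rw [hsplit]
        calc a ^ k * 2 ^ r ≤ (4 * (volume (Q : Set (Rn n)) ^ (α / (n:ℝ) - 2) *
              (∫⁻ y in (Q : Set (Rn n)), g₁ y) *
              (∫⁻ y in (Q : Set (Rn n)), g₂ y))) * 2 ^ r := mul_le_mul_left hk2 _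
          _ = _ := by ring
      calc (a ^ (k+1)) ^ q ≤ ((4 * 2 ^ r) *
            (volume (Q : Set (Rn n)) ^ (α / (n:ℝ) - 2) *
              (∫⁻ y in (Q : Set (Rn n)), g₁ y) *
              (∫⁻ y in (Q : Set (Rn n)), g₂ y))) ^ q :=
            ENNReal.rpow_le_rpow h1 hq.le
        _ = _ := ENNReal.mul_rpow_of_nonneg _ _ hq.le
    calc (∫⁻ x in Ω k \ Ω (k+1), M x ^ q * v x)
        ≤ ∫⁻ x in Ω k \ Ω (k+1), (a ^ (k+1)) ^ q * v x := by
          refine setLIntegral_mono (hv.const_mul _) ?_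
          intro x hx
          have hle : M x ≤ a ^ (k+1) := not_lt.1 hx.2
          exact mul_le_mul_left (ENNReal.rpow_le_rpow hle hq.le) _
      _ = (a ^ (k+1)) ^ q * ∫⁻ x in Ω k \ Ω (k+1), v x := lintegral_const_mul _ hv
      _ ≤ (a ^ (k+1)) ^ q * ∑' (Q : ↥(S k)), wtI v ((Q : Set (Rn n)) \ Ω (k+1)) := by
          refine mul_le_mul_right ?_ _
          calc (∫⁻ x in Ω k \ Ω (k+1), v x)
              ≤ ∫⁻ x in ⋃ (Q : ↥(S k)), ((Q : Set (Rn n)) \ Ω (k+1)), v x := by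
                refine lintegral_mono_set ?_
                intro x hx
                obtain ⟨Q, hQ⟩ := mem_iUnion.1 (hcover hx.1)
                exact mem_iUnion.2 ⟨Q, hQ, hx.2⟩
            _ ≤ ∑' (Q : ↥(S k)), ∫⁻ x in ((Q : Set (Rn n)) \ Ω (k+1)), v x :=
                lintegral_iUnion_le _ _
      _ = ∑' (Q : ↥(S k)), (a ^ (k+1)) ^ q * wtI v ((Q : Set (Rn n)) \ Ω (k+1)) :=
          ENNReal.tsum_mul_left.symm
      _ ≤ ∑' (Q : ↥(S k)), (4 * 2 ^ r) ^ q *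
            ((volume (Q : Set (Rn n)) ^ (α / (n:ℝ) - 2) *
                (∫⁻ y in (Q : Set (Rn n)), g₁ y) *
                (∫⁻ y in (Q : Set (Rn n)), g₂ y)) ^ q *
              wtI v ((Q : Set (Rn n)) \ Ω (k+1))) := by
          refine Summable.tsum_le_tsum (fun Q => ?_) ENNReal.summable ENNReal.summable
          rw [← mul_assoc]
          exact mul_le_mul_left (hkey Q) _
  -- assembling
  have hmeasind : ∀ k : ℤ, Measurable
      ((Ω k \ Ω (k+1)).indicator (fun y => M y ^ q * v y)) :=
    fun k => hMqv.indicator ((hΩmeas k).diff (hΩmeas (k+1)))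
  calc (∫⁻ x, M2D n α 𝒟 g₁ g₂ x ^ q * v x)
      ≤ ∫⁻ x, ((∑' k : ℤ, (Ω k \ Ω (k+1)).indicator (fun y => M y ^ q * v y) x) +
          (⋂ k : ℤ, Ω k).indicator (fun y => M y ^ q * v y) x) := lintegral_mono hpoint
    _ = (∫⁻ x, ∑' k : ℤ, (Ω k \ Ω (k+1)).indicator (fun y => M y ^ q * v y) x) +
        ∫⁻ x, (⋂ k : ℤ, Ω k).indicator (fun y => M y ^ q * v y) x :=
        lintegral_add_left (Measurable.ennreal_tsum hmeasind) _
    _ = (∑' k : ℤ, ∫⁻ x, (Ω k \ Ω (k+1)).indicator (fun y => M y ^ q * v y) x) +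
        ∫⁻ x in (⋂ k : ℤ, Ω k), M x ^ q * v x := by
        rw [lintegral_tsum (fun k => (hmeasind k).aemeasurable),
          lintegral_indicator (MeasurableSet.iInter (fun k => hΩmeas k)) _]
    _ = (∑' k : ℤ, ∫⁻ x in Ω k \ Ω (k+1), M x ^ q * v x) + 0 := by
        rw [setLIntegral_measure_zero _ _ hInter]
        congr 1
        exact tsum_congr fun k =>
          lintegral_indicator ((hΩmeas k).diff (hΩmeas (k+1))) _
    _ ≤ (∑' k : ℤ, ∑' (Q : ↥(S k)), (4 * 2 ^ r) ^ q *
          ((volume (Q : Set (Rn n)) ^ (α / (n:ℝ) - 2) *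
              (∫⁻ y in (Q : Set (Rn n)), g₁ y) *
              (∫⁻ y in (Q : Set (Rn n)), g₂ y)) ^ q *
            wtI v ((Q : Set (Rn n)) \ Ω (k+1)))) + 0 :=
        add_le_add_left (Summable.tsum_le_tsum hstep ENNReal.summable ENNReal.summable) 0
    _ = (4 * 2 ^ r) ^ q * ∑' (k : ℤ), ∑' (Q : ↥(S k)),
          (volume (Q : Set (Rn n)) ^ (α / (n:ℝ) - 2) *
              (∫⁻ y in (Q : Set (Rn n)), g₁ y) *
              (∫⁻ y in (Q : Set (Rn n)), g₂ y)) ^ q *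
            wtI v ((Q : Set (Rn n)) \ Ω (k+1)) := by
        rw [add_zero, ← ENNReal.tsum_mul_left]
        exact tsum_congr fun k => ENNReal.tsum_mul_left
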